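/- arXiv:2103.08382 — 2 statements merged into one kernel-verified Lean document; each statement's English description precedes it below -/
import Mathlib

section
/- Let $T_\alpha$ be the translation $x\mapsto x+\alpha$ on the torus $\mathbb{T}^d$ and $\hat{d}_n^{(r)}(z,\alpha)$ the $r$-th smallest among $\{d(z,k\alpha)\}_{k=0}^{n-1}$. If $\hat{d}_n^{(2)}(z,\alpha)\le\varepsilon$, then for every $r\ge 2$, $\hat{d}_{(r-1)n}^{(r)}(z,\alpha)\le (2r-1)\,\hat{d}_n^{(2)}(z,\alpha)$. -/
/-- `hatd z α r n` is the `r`-th smallest value among `d(z, k·α)` for `0 ≤ k < n`,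
for the translation by `α` on the torus `𝕋^d`. -/
noncomputable def hatd {d : ℕ} (z α : Fin d → AddCircle (1 : ℝ)) (r n : ℕ) : ℝ :=
  sInf {t : ℝ | r ≤ ((Finset.range n).filter fun k => dist z (k • α) ≤ t).card}

section Aux

open Finset

variable {d : ℕ} (z α : Fin d → AddCircle (1 : ℝ)) (r n : ℕ)

lemma hatd_set_nonneg (hr : 1 ≤ r) :
    ∀ t ∈ {t : ℝ | r ≤ ((Finset.range n).filter fun k => dist z (k • α) ≤ t).card}, 0 ≤ t := by
  intro t ht
  by_contra h
  push_neg at h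
  have he : ((Finset.range n).filter fun k => dist z (k • α) ≤ t) = ∅ := by
    apply Finset.filter_false_of_mem
    intro k _ hk
    exact absurd (le_trans dist_nonneg hk) (not_le.mpr h)
  simp only [Set.mem_setOf_eq] at ht
  rw [he] at ht
  simp only [Finset.card_empty] at ht
  omega

lemma hatd_le (hr : 1 ≤ r) {t : ℝ}
    (ht : r ≤ ((Finset.range n).filter fun k => dist z (k • α) ≤ t).card) :
    hatd z α r n ≤ t :=
  csInf_le ⟨0, hatd_set_nonneg z α r n hr⟩ ht

lemma hatd_nonneg (hr : 1 ≤ r) : 0 ≤ hatd z α r n :=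
  Real.sInf_nonneg (hatd_set_nonneg z α r n hr)

lemma hatd_mem (hr : 1 ≤ r)
    (hS : {t : ℝ | r ≤ ((Finset.range n).filter fun k => dist z (k • α) ≤ t).card}.Nonempty) :
    r ≤ ((Finset.range n).filter fun k => dist z (k • α) ≤ hatd z α r n).card := by
  classical
  set S := {t : ℝ | r ≤ ((Finset.range n).filter fun k => dist z (k • α) ≤ t).card} with hSdef
  -- every element of S dominates an element of S that is one of the distance values
  have key : ∀ t ∈ S, ∃ v ∈ S, v ≤ t ∧
      v ∈ (Finset.range n).image (fun k => dist z (k • α)) := by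
    intro t ht
    have ht' : r ≤ ((Finset.range n).filter fun k => dist z (k • α) ≤ t).card := ht
    have hne : ((Finset.range n).filter fun k => dist z (k • α) ≤ t).Nonempty := by
      rw [← Finset.card_pos]; omega
    set F := (Finset.range n).filter fun k => dist z (k • α) ≤ t with hF
    set v := F.sup' hne (fun k => dist z (k • α)) with hv
    obtain ⟨b, hbF, hbv⟩ := Finset.exists_mem_eq_sup' hne (fun k => dist z (k • α))
    have hvt : v ≤ t := by
      apply Finset.sup'_le
      intro k hk
      exact (Finset.mem_filter.mp hk).2
    have hsub : F ⊆ (Finset.range n).filter fun k => dist z (k • α) ≤ v := by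
      intro k hk
      rcases Finset.mem_filter.mp hk with ⟨hk1, _⟩
      exact Finset.mem_filter.mpr ⟨hk1, Finset.le_sup' (fun k => dist z (k • α)) hk⟩
    refine ⟨v, ?_, hvt, ?_⟩
    · exact le_trans ht (Finset.card_le_card hsub)
    · exact Finset.mem_image.mpr ⟨b, (Finset.mem_filter.mp hbF).1, hbv.symm⟩
  obtain ⟨t0, ht0⟩ := hS
  obtain ⟨v0, hv0S, _, hv0V⟩ := key t0 ht0
  set W := ((Finset.range n).image (fun k => dist z (k • α))).filter (· ∈ S) with hW
  have hWne : W.Nonempty := ⟨v0, Finset.mem_filter.mpr ⟨hv0V, hv0S⟩⟩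
  set m0 := W.min' hWne with hm0
  have hm0S : m0 ∈ S := (Finset.mem_filter.mp (W.min'_mem hWne)).2
  have hm0lb : ∀ t ∈ S, m0 ≤ t := by
    intro t ht
    obtain ⟨v, hvS, hvt, hvV⟩ := key t ht
    exact le_trans (Finset.min'_le W v (Finset.mem_filter.mpr ⟨hvV, hvS⟩)) hvt
  have : hatd z α r n = m0 := by
    apply le_antisymm
    · exact csInf_le ⟨0, hatd_set_nonneg z α r n hr⟩ hm0S
    · exact le_csInf ⟨t0, ht0⟩ hm0lb
  rw [this]
  exact hm0S

end Aux

/-- For a toral translation, two close visits before time `n` generate `r` close visits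
before time `(r-1)n`: if `d̂_n^{(2)}(z,α) ≤ ε` then for every `r ≥ 2`,
`d̂_{(r-1)n}^{(r)}(z,α) ≤ (2r-1) d̂_n^{(2)}(z,α)`. -/
theorem toral_translation_multiple_visits {d : ℕ} (z α : Fin d → AddCircle (1 : ℝ))
    (n : ℕ) (ε : ℝ) (hε : hatd z α 2 n ≤ ε) :
    ∀ r : ℕ, 2 ≤ r →
      hatd z α r ((r - 1) * n) ≤ (2 * (r : ℝ) - 1) * hatd z α 2 n := by
  classical
  intro r hr
  set m := hatd z α 2 n with hm
  have hm0 : 0 ≤ m := hatd_nonneg z α 2 n (by norm_num)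
  have hrR : (2 : ℝ) ≤ (r : ℝ) := by exact_mod_cast hr
  have hcoef : (0 : ℝ) ≤ 2 * (r : ℝ) - 1 := by linarith
  by_cases hn : n < 2
  · -- degenerate case: `(r-1)*n < r`, so the defining set is empty and the LHS is `0`
    have hempty : {t : ℝ |
        r ≤ ((Finset.range ((r - 1) * n)).filter fun k => dist z (k • α) ≤ t).card} = ∅ := by
      ext t
      simp only [Set.mem_setOf_eq, Set.mem_empty_iff_false, iff_false, not_le]
      have hle : ((Finset.range ((r - 1) * n)).filter fun k => dist z (k • α) ≤ t).card
          ≤ (r - 1) * n := le_trans (Finset.card_filter_le _ _) (le_of_eq (Finset.card_range _))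
      have hlt : (r - 1) * n ≤ r - 1 := by
        have := Nat.mul_le_mul_left (r - 1) (show n ≤ 1 by omega)
        simpa using this
      omega
    rw [hatd, hempty, Real.sInf_empty]
    exact mul_nonneg hcoef hm0
  · push_neg at hn
    -- the defining set for `hatd z α 2 n` is nonempty
    have hSne : {t : ℝ | 2 ≤ ((Finset.range n).filter fun k => dist z (k • α) ≤ t).card}.Nonempty := by
      have hne : (Finset.range n).Nonempty := ⟨0, Finset.mem_range.mpr (by omega)⟩
      refine ⟨(Finset.range n).sup' hne (fun k => dist z (k • α)), ?_⟩
      have : ((Finset.range n).filter fun k =>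
          dist z (k • α) ≤ (Finset.range n).sup' hne (fun k => dist z (k • α))) =
          Finset.range n := by
        apply Finset.filter_true_of_mem
        intro k hk
        exact Finset.le_sup' (fun k => dist z (k • α)) hk
      simp only [Set.mem_setOf_eq, this, Finset.card_range]
      omega
    have h2 := hatd_mem z α 2 n (by norm_num) hSne
    rw [← hm] at h2
    obtain ⟨a, ha, b, hb, hab⟩ := Finset.one_lt_card.mp
      (show 1 < ((Finset.range n).filter fun k => dist z (k • α) ≤ m).card by omega)
    -- order them
    obtain ⟨k1, k2, hk1, hk2, hlt⟩ :
        ∃ k1 k2, k1 ∈ (Finset.range n).filter (fun k => dist z (k • α) ≤ m) ∧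
          k2 ∈ (Finset.range n).filter (fun k => dist z (k • α) ≤ m) ∧ k1 < k2 := by
      rcases lt_or_gt_of_ne hab with h | h
      · exact ⟨a, b, ha, hb, h⟩
      · exact ⟨b, a, hb, ha, h⟩
    rcases Finset.mem_filter.mp hk1 with ⟨hk1n, hd1⟩
    rcases Finset.mem_filter.mp hk2 with ⟨hk2n, hd2⟩
    rw [Finset.mem_range] at hk1n hk2n
    set k := k2 - k1 with hk
    have hkpos : 1 ≤ k := by omega
    have hksum : k1 + k = k2 := by omega
    -- norm of `k • α` is at most `2m`
    have hkk : (k : ℕ) • α = k2 • α - k1 • α := by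
      have h1 : k1 • α + k • α = k2 • α := by rw [← add_nsmul, hksum]
      exact (eq_sub_of_add_eq' h1)
    have hnormk : ‖(k : ℕ) • α‖ ≤ 2 * m := by
      rw [hkk, ← dist_eq_norm]
      calc dist (k2 • α) (k1 • α) ≤ dist (k2 • α) z + dist z (k1 • α) := dist_triangle _ _ _
        _ ≤ m + m := by rw [dist_comm (k2 • α) z]; exact add_le_add hd2 hd1
        _ = 2 * m := by ring
    -- key distance bound
    have hkey : ∀ s : ℕ, dist z ((k2 + s * k) • α) ≤ (1 + 2 * (s : ℝ)) * m := by
      intro s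
      have h1 : (k2 + s * k) • α = k2 • α + s • (k • α) := by
        rw [add_nsmul, mul_smul]
      calc dist z ((k2 + s * k) • α)
          ≤ dist z (k2 • α) + dist (k2 • α) ((k2 + s * k) • α) := dist_triangle _ _ _
        _ = dist z (k2 • α) + ‖s • (k • α)‖ := by rw [h1, dist_self_add_right]
        _ ≤ m + (s : ℝ) * ‖(k : ℕ) • α‖ := add_le_add hd2 norm_nsmul_le
        _ ≤ m + (s : ℝ) * (2 * m) := by
            have := mul_le_mul_of_nonneg_left hnormk (by positivity : (0:ℝ) ≤ (s:ℝ))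
            linarith
        _ = (1 + 2 * (s : ℝ)) * m := by ring
    -- the witness finset
    set T : Finset ℕ := insert k1 ((Finset.range (r - 1)).image fun s => k2 + s * k) with hT
    have hinj : Set.InjOn (fun s => k2 + s * k) (Finset.range (r - 1)) := by
      intro a _ b _ hab2
      simp only at hab2
      have : a * k = b * k := by omega
      exact Nat.eq_of_mul_eq_mul_right (by omega) this
    have hk1not : k1 ∉ (Finset.range (r - 1)).image fun s => k2 + s * k := by
      intro hmem
      obtain ⟨s, _, hs⟩ := Finset.mem_image.mp hmem
      omega
    have hcard : T.card = r := by
      rw [hT, Finset.card_insert_of_notMem hk1not, Finset.card_image_of_injOn hinj,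
        Finset.card_range]
      omega
    have hsub : T ⊆ (Finset.range ((r - 1) * n)).filter
        fun j => dist z (j • α) ≤ (2 * (r : ℝ) - 1) * m := by
      intro j hj
      rw [hT, Finset.mem_insert] at hj
      rcases hj with rfl | hj
      · refine Finset.mem_filter.mpr ⟨Finset.mem_range.mpr ?_, ?_⟩
        · calc j < n := hk1n
            _ ≤ (r - 1) * n := Nat.le_mul_of_pos_left n (by omega)
        · calc dist z (j • α) ≤ m := hd1
            _ ≤ (2 * (r : ℝ) - 1) * m := le_mul_of_one_le_left hm0 (by linarith)
      · obtain ⟨s, hs, rfl⟩ := Finset.mem_image.mp hj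
        rw [Finset.mem_range] at hs
        refine Finset.mem_filter.mpr ⟨Finset.mem_range.mpr ?_, ?_⟩
        · -- k2 + s * k < (r-1) * n
          have h1 : k2 + s * k ≤ (s + 1) * (n - 1) := by
            have hk2' : k2 ≤ n - 1 := by omega
            have hk' : k ≤ n - 1 := by omega
            calc k2 + s * k ≤ (n - 1) + s * (n - 1) :=
              add_le_add hk2' (Nat.mul_le_mul_left s hk')
              _ = (s + 1) * (n - 1) := by ring
          have h2 : (s + 1) * (n - 1) ≤ (r - 1) * (n - 1) :=
            Nat.mul_le_mul_right _ (by omega)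
          have h3 : (r - 1) * (n - 1) < (r - 1) * n :=
            Nat.mul_lt_mul_of_pos_left (by omega) (by omega)
          omega
        · have hsR : (s : ℝ) ≤ (r : ℝ) - 2 := by
            have : s ≤ r - 2 := by omega
            have := (Nat.cast_le (α := ℝ)).mpr this
            rw [Nat.cast_sub hr] at this
            push_cast at this
            linarith
          calc dist z ((k2 + s * k) • α) ≤ (1 + 2 * (s : ℝ)) * m := hkey s
            _ ≤ (2 * (r : ℝ) - 1) * m := by nlinarith
    have hfinal : r ≤ ((Finset.range ((r - 1) * n)).filter
        fun j => dist z (j • α) ≤ (2 * (r : ℝ) - 1) * m).card := by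
      calc r = T.card := hcard.symm
        _ ≤ _ := Finset.card_le_card hsub
    exact hatd_le z α r ((r - 1) * n) (by omega) hfinal
end

section
/- Let $(\Omega,\mathcal{F},\mathbb{P})$ be a probability space and $(\mathcal{D}_m)_{m\ge 1}$ a sequence of events. Suppose there exist constants and sequences such that for each $\delta>0$ there is $m(\delta)$ with $\mathbb{P}(\mathcal{D}_i\cap\mathcal{D}_j)-\mathbb{P}(\mathcal{D}_i)\mathbb{P}(\mathcal{D}_j)\le \delta\,\mathbb{P}(\mathcal{D}_i)\mathbb{P}(\mathcal{D}_j)+2i^{-10}\mathbb{P}(\mathcal{D}_j)+2j^{-10}\mathbb{P}(\mathcal{D}_i)+2(ij)^{-10}$ whenever $i\ge m(\delta)$ and $j-i\ge m(\delta)$. If $\sum_m \mathbb{P}(\mathcal{D}_m)=\infty$, then setting $Z_n=\sum_{m=1}^n 1_{\mathcal{D}_m}$ one has $\mathrm{Var}(Z_n)/\mathbb{E}(Z_n)^2\to 0$, and consequently infinitely many $\mathcal{D}_m$ occur almost surely. -/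
open MeasureTheory ProbabilityTheory Filter

section AuxSection
lemma aux_zpow_nonneg (i : ℕ) : (0:ℝ) ≤ (i:ℝ)^(-10:ℤ) := by positivity

lemma aux_sum_zpow (n : ℕ) : ∑ i ∈ Finset.range n, (2 * (i:ℝ)^(-10:ℤ)) ≤ 4 := by
  have key : ∀ i : ℕ, 2 * (i:ℝ)^(-10:ℤ) ≤
      (fun i : ℕ => if i = 0 then (4:ℝ) else 4 / i) i -
      (fun i : ℕ => if i = 0 then (4:ℝ) else 4 / i) (i+1) := by
    intro i
    rcases Nat.eq_zero_or_pos i with rfl | hi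
    · norm_num
    · have hi' : (1:ℝ) ≤ (i:ℝ) := by exact_mod_cast hi
      have h0 : (0:ℝ) < i := by linarith
      simp only [if_neg hi.ne', if_neg (Nat.succ_ne_zero i)]
      push_cast
      rw [show (4:ℝ)/i - 4/((i:ℝ)+1) = 4/((i:ℝ)*((i:ℝ)+1)) by field_simp; ring]
      have hpow : (i:ℝ)^(-10:ℤ) = 2 / (2*(i:ℝ)^10) := by
        rw [zpow_neg, show ((10:ℤ)) = ((10:ℕ):ℤ) by norm_num, zpow_natCast]
        field_simp
      rw [hpow, show (2:ℝ) * (2/(2*(i:ℝ)^10)) = 4/(2*(i:ℝ)^10) by ring]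
      apply div_le_div_of_nonneg_left (by norm_num) (by positivity)
      have h2 : (i:ℝ)^2 ≤ (i:ℝ)^10 := pow_le_pow_right₀ hi' (by norm_num)
      nlinarith
  calc ∑ i ∈ Finset.range n, (2 * (i:ℝ)^(-10:ℤ))
      ≤ ∑ i ∈ Finset.range n, ((fun i : ℕ => if i = 0 then (4:ℝ) else 4 / i) i -
        (fun i : ℕ => if i = 0 then (4:ℝ) else 4 / i) (i+1)) := Finset.sum_le_sum (fun i _ => key i)
    _ = (4:ℝ) - (if n = 0 then (4:ℝ) else 4 / n) := by rw [Finset.sum_range_sub']; norm_num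
    _ ≤ 4 := by
        rcases Nat.eq_zero_or_pos n with rfl | hn
        · norm_num
        · have : (0:ℝ) < n := by exact_mod_cast hn
          rw [if_neg hn.ne']
          have : (0:ℝ) ≤ 4 / n := by positivity
          linarith


section AuxSection
variable {Ω : Type*} [MeasurableSpace Ω] (μ : Measure Ω) [IsProbabilityMeasure μ]
  (D : ℕ → Set Ω)

lemma aux_cov_le_left (i j : ℕ) :
    (μ (D i ∩ D j)).toReal - (μ (D i)).toReal * (μ (D j)).toReal ≤ (μ (D i)).toReal := by
  have h1 : (μ (D i ∩ D j)).toReal ≤ (μ (D i)).toReal :=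
    ENNReal.toReal_mono (measure_ne_top μ _) (measure_mono Set.inter_subset_left)
  have h2 : 0 ≤ (μ (D i)).toReal * (μ (D j)).toReal := by positivity
  linarith

lemma aux_cov_le_right (i j : ℕ) :
    (μ (D i ∩ D j)).toReal - (μ (D i)).toReal * (μ (D j)).toReal ≤ (μ (D j)).toReal := by
  have h1 : (μ (D i ∩ D j)).toReal ≤ (μ (D j)).toReal :=
    ENNReal.toReal_mono (measure_ne_top μ _) (measure_mono Set.inter_subset_right)
  have h2 : 0 ≤ (μ (D i)).toReal * (μ (D j)).toReal := by positivity
  linarith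

lemma aux_varbound (δ : ℝ) (hδ : 0 < δ) (m₀ : ℕ)
    (h : ∀ i j : ℕ, m₀ ≤ i → i < j → m₀ ≤ j - i →
      (μ (D i ∩ D j)).toReal - (μ (D i)).toReal * (μ (D j)).toReal ≤
        δ * ((μ (D i)).toReal * (μ (D j)).toReal) +
          2 * (i : ℝ) ^ (-10 : ℤ) * (μ (D j)).toReal +
          2 * (j : ℝ) ^ (-10 : ℤ) * (μ (D i)).toReal +
          2 * ((i : ℝ) * (j : ℝ)) ^ (-10 : ℤ)) (n : ℕ) :
    ∑ i ∈ Finset.range n, ∑ j ∈ Finset.range n,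
      ((μ (D i ∩ D j)).toReal - (μ (D i)).toReal * (μ (D j)).toReal) ≤
    δ * (∑ m ∈ Finset.range n, (μ (D m)).toReal)^2 +
      (4*(m₀+1)+8) * (∑ m ∈ Finset.range n, (μ (D m)).toReal) + 16 := by
  set M := m₀ + 1 with hM
  set p : ℕ → ℝ := fun m => (μ (D m)).toReal with hp
  set e : ℕ → ℝ := fun i => 2 * (i:ℝ)^(-10:ℤ) with he
  set S := ∑ m ∈ Finset.range n, p m with hSdef
  set E := ∑ m ∈ Finset.range n, e m with hEdef
  have hpnn : ∀ m, 0 ≤ p m := fun m => ENNReal.toReal_nonneg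
  have hS : 0 ≤ S := Finset.sum_nonneg fun m _ => hpnn m
  have henn : ∀ i, 0 ≤ e i := fun i => by positivity
  have hE0 : 0 ≤ E := Finset.sum_nonneg fun m _ => henn m
  have hE : E ≤ 4 := by
    rw [hEdef]; exact aux_sum_zpow n

  -- termwise bound
  have hterm : ∀ i j : ℕ,
      (μ (D i ∩ D j)).toReal - p i * p j ≤
      (δ * (p i * p j) + e i * p j + e j * p i + e i * e j) +
      ((if i < M then p j else 0) + (if j < M then p i else 0) +
        (if (i < j + M ∧ j < i + M) then p i else 0)) := by
    intro i j
    have hBnn : 0 ≤ (if i < M then p j else 0) + (if j < M then p i else 0) +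
        (if (i < j + M ∧ j < i + M) then p i else 0) := by
      have : (0:ℝ) ≤ (if i < M then p j else 0) := by split <;> [exact hpnn j; rfl]
      have : (0:ℝ) ≤ (if j < M then p i else 0) := by split <;> [exact hpnn i; rfl]
      have : (0:ℝ) ≤ (if (i < j + M ∧ j < i + M) then p i else 0) := by
        split <;> [exact hpnn i; rfl]
      positivity
    have hAnn : 0 ≤ δ * (p i * p j) + e i * p j + e j * p i + e i * e j := by
      have := hpnn i; have := hpnn j; have := henn i; have := henn j
      positivity
    by_cases hgood : M ≤ i ∧ M ≤ j ∧ (i + M ≤ j ∨ j + M ≤ i)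
    · obtain ⟨hi, hj, hij | hji⟩ := hgood
      · have hh := h i j (by omega) (by omega) (by omega)
        have hmul : ((i:ℝ) * (j:ℝ))^(-10:ℤ) = (i:ℝ)^(-10:ℤ) * (j:ℝ)^(-10:ℤ) := mul_zpow _ _ _
        have h10i : (0:ℝ) ≤ (i:ℝ)^(-10:ℤ) := by positivity
        have h10j : (0:ℝ) ≤ (j:ℝ)^(-10:ℤ) := by positivity
        have : 2 * ((i:ℝ) * (j:ℝ))^(-10:ℤ) ≤ e i * e j := by
          rw [hmul, he]; simp only
          nlinarith [mul_nonneg h10i h10j]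
        have hei : e i = 2*(i:ℝ)^(-10:ℤ) := rfl
        have hej : e j = 2*(j:ℝ)^(-10:ℤ) := rfl
        simp only [hp, hei, hej] at hh this hBnn ⊢
        linarith [hBnn]
      · have hh := h j i (by omega) (by omega) (by omega)
        rw [Set.inter_comm, mul_comm ((μ (D j)).toReal) ((μ (D i)).toReal)] at hh
        have hmul : ((j:ℝ) * (i:ℝ))^(-10:ℤ) = (j:ℝ)^(-10:ℤ) * (i:ℝ)^(-10:ℤ) := mul_zpow _ _ _
        have h10i : (0:ℝ) ≤ (i:ℝ)^(-10:ℤ) := by positivity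
        have h10j : (0:ℝ) ≤ (j:ℝ)^(-10:ℤ) := by positivity
        have : 2 * ((j:ℝ) * (i:ℝ))^(-10:ℤ) ≤ e i * e j := by
          rw [hmul, he]; simp only
          nlinarith [mul_nonneg h10i h10j]
        have hei : e i = 2*(i:ℝ)^(-10:ℤ) := rfl
        have hej : e j = 2*(j:ℝ)^(-10:ℤ) := rfl
        simp only [hp, hei, hej] at hh this hBnn ⊢
        linarith [hBnn]
    · -- bad pair
      have hcase : i < M ∨ j < M ∨ (i < j + M ∧ j < i + M) := by omega
      have hcovi := aux_cov_le_left μ D i j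
      have hcovj := aux_cov_le_right μ D i j
      simp only [hp] at hcovi hcovj ⊢
      rcases hcase with hc | hc | hc
      · rw [if_pos hc]
        have h2 : (0:ℝ) ≤ (if j < M then p i else 0) := by split <;> [exact hpnn i; rfl]
        have h3 : (0:ℝ) ≤ (if (i < j + M ∧ j < i + M) then p i else 0) := by
          split <;> [exact hpnn i; rfl]
        linarith
      · rw [if_pos hc]
        have h1 : (0:ℝ) ≤ (if i < M then p j else 0) := by split <;> [exact hpnn j; rfl]
        have h3 : (0:ℝ) ≤ (if (i < j + M ∧ j < i + M) then p i else 0) := by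
          split <;> [exact hpnn i; rfl]
        linarith
      · rw [if_pos hc]
        have h1 : (0:ℝ) ≤ (if i < M then p j else 0) := by split <;> [exact hpnn j; rfl]
        have h2 : (0:ℝ) ≤ (if j < M then p i else 0) := by split <;> [exact hpnn i; rfl]
        linarith
  -- summation
  have hcard : ((Finset.range n).filter (· < M)).card ≤ M := by
    refine le_trans (Finset.card_le_card fun x hx => Finset.mem_range.mpr (Finset.mem_filter.mp hx).2) ?_
    simp
  have h5 : ∑ i ∈ Finset.range n, ∑ j ∈ Finset.range n, (if i < M then p j else 0) ≤ M * S := by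
    have hin : ∀ i : ℕ, ∑ j ∈ Finset.range n, (if i < M then p j else 0)
        = if i < M then S else 0 := fun i => by split_ifs <;> simp [hSdef]
    calc ∑ i ∈ Finset.range n, ∑ j ∈ Finset.range n, (if i < M then p j else 0)
        = ∑ i ∈ Finset.range n, (if i < M then S else 0) := by simp only [hin]
      _ = ∑ i ∈ (Finset.range n).filter (· < M), S := (Finset.sum_filter _ _).symm
      _ = (((Finset.range n).filter (· < M)).card : ℝ) * S := by
          rw [Finset.sum_const, nsmul_eq_mul]
      _ ≤ M * S := by
          apply mul_le_mul_of_nonneg_right _ hS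
          exact_mod_cast hcard
  have h6 : ∑ i ∈ Finset.range n, ∑ j ∈ Finset.range n, (if j < M then p i else 0) ≤ M * S := by
    have hin : ∀ i : ℕ, ∑ j ∈ Finset.range n, (if j < M then p i else 0) ≤ M * p i := by
      intro i
      calc ∑ j ∈ Finset.range n, (if j < M then p i else 0)
          = ∑ j ∈ (Finset.range n).filter (· < M), p i := (Finset.sum_filter _ _).symm
        _ = (((Finset.range n).filter (· < M)).card : ℝ) * p i := by
            rw [Finset.sum_const, nsmul_eq_mul]
        _ ≤ M * p i := by
            apply mul_le_mul_of_nonneg_right _ (hpnn i)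
            exact_mod_cast hcard
    calc ∑ i ∈ Finset.range n, ∑ j ∈ Finset.range n, (if j < M then p i else 0)
        ≤ ∑ i ∈ Finset.range n, M * p i := Finset.sum_le_sum fun i _ => hin i
      _ = M * S := by rw [← Finset.mul_sum]
  have h7 : ∑ i ∈ Finset.range n, ∑ j ∈ Finset.range n,
      (if (i < j + M ∧ j < i + M) then p i else 0) ≤ 2 * M * S := by
    have hin : ∀ i : ℕ, ∑ j ∈ Finset.range n, (if (i < j + M ∧ j < i + M) then p i else 0)
        ≤ (2*M) * p i := by
      intro i
      have hcard2 : ((Finset.range n).filter (fun j => i < j + M ∧ j < i + M)).card ≤ 2*M := by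
        have hsub : (Finset.range n).filter (fun j => i < j + M ∧ j < i + M) ⊆
            Finset.Ico (i+1-M) (i+M) := by
          intro x hx
          have hx' := Finset.mem_filter.mp hx
          exact Finset.mem_Ico.mpr (by omega)
        refine le_trans (Finset.card_le_card hsub) ?_
        rw [Nat.card_Ico]
        omega
      calc ∑ j ∈ Finset.range n, (if (i < j + M ∧ j < i + M) then p i else 0)
          = ∑ j ∈ (Finset.range n).filter (fun j => i < j + M ∧ j < i + M), p i :=
            (Finset.sum_filter _ _).symm
        _ = (((Finset.range n).filter (fun j => i < j + M ∧ j < i + M)).card : ℝ) * p i := by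
            rw [Finset.sum_const, nsmul_eq_mul]
        _ ≤ (2*M) * p i := by
            apply mul_le_mul_of_nonneg_right _ (hpnn i)
            exact_mod_cast hcard2
    calc ∑ i ∈ Finset.range n, ∑ j ∈ Finset.range n, (if (i < j + M ∧ j < i + M) then p i else 0)
        ≤ ∑ i ∈ Finset.range n, (2*M) * p i := Finset.sum_le_sum fun i _ => hin i
      _ = 2 * M * S := by rw [← Finset.mul_sum]
  have h1 : ∑ i ∈ Finset.range n, ∑ j ∈ Finset.range n, δ * (p i * p j) = δ * (S * S) := by
    rw [hSdef, Finset.sum_mul_sum, Finset.mul_sum]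
    try exact Finset.sum_congr rfl fun i _ => by rw [Finset.mul_sum]
  have h2 : ∑ i ∈ Finset.range n, ∑ j ∈ Finset.range n, e i * p j = E * S := by
    rw [hSdef, hEdef, Finset.sum_mul_sum]
  have h3 : ∑ i ∈ Finset.range n, ∑ j ∈ Finset.range n, e j * p i = E * S := by
    rw [Finset.sum_comm, hSdef, hEdef, Finset.sum_mul_sum]
    try exact Finset.sum_congr rfl fun j _ => Finset.sum_congr rfl fun i _ => rfl
  have h4 : ∑ i ∈ Finset.range n, ∑ j ∈ Finset.range n, e i * e j = E * E := by
    rw [hEdef, Finset.sum_mul_sum]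
  calc ∑ i ∈ Finset.range n, ∑ j ∈ Finset.range n,
      ((μ (D i ∩ D j)).toReal - (μ (D i)).toReal * (μ (D j)).toReal)
      ≤ ∑ i ∈ Finset.range n, ∑ j ∈ Finset.range n,
        ((δ * (p i * p j) + e i * p j + e j * p i + e i * e j) +
        ((if i < M then p j else 0) + (if j < M then p i else 0) +
          (if (i < j + M ∧ j < i + M) then p i else 0))) :=
        Finset.sum_le_sum fun i _ => Finset.sum_le_sum fun j _ => hterm i j
    _ = δ * (S * S) + E * S + E * S + E * E +
        (∑ i ∈ Finset.range n, ∑ j ∈ Finset.range n, (if i < M then p j else 0)) +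
        (∑ i ∈ Finset.range n, ∑ j ∈ Finset.range n, (if j < M then p i else 0)) +
        (∑ i ∈ Finset.range n, ∑ j ∈ Finset.range n,
          (if (i < j + M ∧ j < i + M) then p i else 0)) := by
        simp only [Finset.sum_add_distrib, h1, h2, h3, h4]; ring
    _ ≤ δ * (S * S) + E * S + E * S + E * E + M * S + M * S + (2 * M * S) := by
        linarith [h5, h6, h7]
    _ ≤ δ * S ^ 2 + (4 * (↑m₀ + 1) + 8) * S + 16 := by
        have hMS : (M:ℝ) = (m₀:ℝ) + 1 := by rw [hM]; push_cast; ring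
        nlinarith [mul_le_mul_of_nonneg_right hE hS, sq_nonneg (E - 4), hE, hE0, hS]

end AuxSection
section AuxSection
variable {Ω : Type*} [MeasurableSpace Ω] (μ : Measure Ω) [IsProbabilityMeasure μ]
  (D : ℕ → Set Ω) (hD : ∀ m, MeasurableSet (D m))
include hD

lemma aux_memLp (n : ℕ) :
    MemLp (fun ω => ∑ m ∈ Finset.range n, Set.indicator (D m) (fun _ => (1:ℝ)) ω) 2 μ := by
  apply memLp_finset_sum
  intro m _
  exact memLp_indicator_const 2 (hD m) 1 (Or.inr (measure_ne_top μ _))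

lemma aux_integrable (i j : ℕ) :
    Integrable (fun ω => Set.indicator (D i) (fun _ => (1:ℝ)) ω *
      Set.indicator (D j) (fun _ => (1:ℝ)) ω) μ := by
  have : (fun ω => Set.indicator (D i) (fun _ => (1:ℝ)) ω *
      Set.indicator (D j) (fun _ => (1:ℝ)) ω) =
      fun ω => Set.indicator (D i ∩ D j) (fun _ => (1:ℝ)) ω := by
    funext ω
    rw [← Set.inter_indicator_mul]
    norm_num
  rw [this]
  exact (memLp_one_iff_integrable).1
    (memLp_indicator_const 1 ((hD i).inter (hD j)) 1 (Or.inr (measure_ne_top μ _)))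

lemma aux_exp (n : ℕ) :
    ∫ ω, (∑ m ∈ Finset.range n, Set.indicator (D m) (fun _ => (1:ℝ)) ω) ∂μ =
    ∑ m ∈ Finset.range n, (μ (D m)).toReal := by
  rw [integral_finset_sum]
  · exact Finset.sum_congr rfl fun m _ => by rw [integral_indicator_const _ (hD m)]; simp; rfl
  · intro m _
    exact (memLp_one_iff_integrable).1
      (memLp_indicator_const 1 (hD m) 1 (Or.inr (measure_ne_top μ _)))

lemma aux_var (n : ℕ) :
    variance (fun ω => ∑ m ∈ Finset.range n, Set.indicator (D m) (fun _ => (1:ℝ)) ω) μ =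
    ∑ i ∈ Finset.range n, ∑ j ∈ Finset.range n,
      ((μ (D i ∩ D j)).toReal - (μ (D i)).toReal * (μ (D j)).toReal) := by
  rw [variance_eq_sub (aux_memLp μ D hD n), aux_exp μ D hD n]
  have hsq : ∫ ω, ((fun ω => ∑ m ∈ Finset.range n, Set.indicator (D m) (fun _ => (1:ℝ)) ω) ^ 2) ω ∂μ
      = ∑ i ∈ Finset.range n, ∑ j ∈ Finset.range n, (μ (D i ∩ D j)).toReal := by
    have hfun : ∀ ω, ((fun ω => ∑ m ∈ Finset.range n, Set.indicator (D m) (fun _ => (1:ℝ)) ω) ^ 2) ω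
        = ∑ i ∈ Finset.range n, ∑ j ∈ Finset.range n,
          Set.indicator (D i) (fun _ => (1:ℝ)) ω * Set.indicator (D j) (fun _ => (1:ℝ)) ω := by
      intro ω
      simp only [Pi.pow_apply, sq, Finset.sum_mul_sum]
    simp only [hfun]
    rw [integral_finset_sum _ (fun i _ => integrable_finset_sum _ (fun j _ => aux_integrable μ D hD i j))]
    refine Finset.sum_congr rfl fun i _ => ?_
    rw [integral_finset_sum _ (fun j _ => aux_integrable μ D hD i j)]
    refine Finset.sum_congr rfl fun j _ => ?_
    have : (fun ω => Set.indicator (D i) (fun _ => (1:ℝ)) ω * Set.indicator (D j) (fun _ => (1:ℝ)) ω)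
        = fun ω => Set.indicator (D i ∩ D j) (fun _ => (1:ℝ)) ω := by
      funext ω; rw [← Set.inter_indicator_mul]; norm_num
    rw [this, integral_indicator_const _ ((hD i).inter (hD j))]; simp; rfl
  rw [hsq, sq, Finset.sum_mul_sum, ← Finset.sum_sub_distrib]
  exact Finset.sum_congr rfl fun i _ => by rw [← Finset.sum_sub_distrib]


end AuxSection


/-- Quasi-independent Borel–Cantelli: under the asymptotic quasi-independence estimate on
pairs `(D_i, D_j)` with `i, j - i ≥ m(δ)`, divergence of `∑ P(D_m)` implies
`Var(Z_n)/E(Z_n)² → 0` for `Z_n = ∑_{m<n} 1_{D_m}`, and infinitely many `D_m` occur a.s. -/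
theorem quasi_independent_borel_cantelli {Ω : Type*} [MeasurableSpace Ω]
    (μ : Measure Ω) [IsProbabilityMeasure μ]
    (D : ℕ → Set Ω) (hD : ∀ m, MeasurableSet (D m))
    (hqi : ∀ δ : ℝ, 0 < δ → ∃ m₀ : ℕ, ∀ i j : ℕ, m₀ ≤ i → i < j → m₀ ≤ j - i →
      (μ (D i ∩ D j)).toReal - (μ (D i)).toReal * (μ (D j)).toReal ≤
        δ * ((μ (D i)).toReal * (μ (D j)).toReal) +
          2 * (i : ℝ) ^ (-10 : ℤ) * (μ (D j)).toReal +
          2 * (j : ℝ) ^ (-10 : ℤ) * (μ (D i)).toReal +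
          2 * ((i : ℝ) * (j : ℝ)) ^ (-10 : ℤ))
    (hdiv : Tendsto (fun n => ∑ m ∈ Finset.range n, (μ (D m)).toReal) atTop atTop) :
    Tendsto (fun n =>
        variance (fun ω => ∑ m ∈ Finset.range n,
          Set.indicator (D m) (fun _ => (1 : ℝ)) ω) μ /
          (∑ m ∈ Finset.range n, (μ (D m)).toReal) ^ 2) atTop (nhds 0) ∧
      μ (Filter.limsup D atTop) = 1 := by
  set Z : ℕ → Ω → ℝ :=
    fun n ω => ∑ m ∈ Finset.range n, Set.indicator (D m) (fun _ => (1:ℝ)) ω with hZ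
  set S : ℕ → ℝ := fun n => ∑ m ∈ Finset.range n, (μ (D m)).toReal with hSdef
  have part1 : Tendsto (fun n => variance (Z n) μ / (S n) ^ 2) atTop (nhds 0) := by
    rw [NormedAddCommGroup.tendsto_nhds_zero]
    intro ε hε
    obtain ⟨m₀, hm⟩ := hqi (ε/3) (by linarith)
    set K : ℝ := 4*((m₀:ℝ)+1)+8 with hKdef
    have hK : 0 ≤ K := by positivity
    have hev : ∀ᶠ n in atTop, max 1 ((K+16)*3/ε) ≤ S n := hdiv.eventually_ge_atTop _
    filter_upwards [hev] with n hn
    have hS1 : (1:ℝ) ≤ S n := le_trans (le_max_left _ _) hn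
    have hSK : (K+16)*3/ε ≤ S n := le_trans (le_max_right _ _) hn
    have hS0 : (0:ℝ) < S n := by linarith
    have hKS : (K+16)*3 ≤ S n * ε := by rwa [div_le_iff₀ hε] at hSK
    have hbound := aux_varbound μ D (ε/3) (by linarith) m₀ hm n
    rw [← aux_var μ D hD n] at hbound
    have hv0 : 0 ≤ variance (Z n) μ := variance_nonneg _ _
    rw [Real.norm_eq_abs, abs_of_nonneg (div_nonneg hv0 (sq_nonneg _)),
      div_lt_iff₀ (by positivity)]
    have hb : variance (Z n) μ ≤ ε/3 * S n ^ 2 + K * S n + 16 := hbound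
    have h16 : (16:ℝ) ≤ 16 * S n := by linarith
    have hKS2 : (K + 16) * S n ≤ (S n * ε / 3) * S n := by
      apply mul_le_mul_of_nonneg_right _ hS0.le
      linarith
    nlinarith [sq_nonneg (S n), mul_pos hS0 hS0]
  refine ⟨part1, ?_⟩
  -- choose a subsequence along which variance/S² is summable and S → ∞
  have hchoice : ∀ k : ℕ, ∃ n : ℕ,
      variance (Z n) μ / (S n)^2 < (1/2:ℝ)^k / 4 ∧ (k:ℝ)+1 ≤ S n := by
    intro k
    have h1 := part1.eventually (eventually_lt_nhds (show (0:ℝ) < (1/2:ℝ)^k/4 by positivity))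
    have h2 := hdiv.eventually_ge_atTop ((k:ℝ)+1)
    exact (h1.and h2).exists
  choose nn hnn using hchoice
  set Ek : ℕ → Set Ω := fun k => {ω | Z (nn k) ω ≤ S (nn k) / 2} with hEkdef
  have hEk : ∀ k, μ (Ek k) ≤ ENNReal.ofReal ((1/2:ℝ)^k) := by
    intro k
    have hSpos : 0 < S (nn k) := lt_of_lt_of_le (by positivity) (hnn k).2
    have hsub : Ek k ⊆ {ω | S (nn k)/2 ≤ |Z (nn k) ω - ∫ x, Z (nn k) x ∂μ|} := by
      intro ω hω
      simp only [hEkdef, Set.mem_setOf_eq] at hω ⊢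
      rw [show ∫ x, Z (nn k) x ∂μ = S (nn k) from aux_exp μ D hD (nn k)]
      calc S (nn k)/2 ≤ S (nn k) - Z (nn k) ω := by linarith
        _ ≤ |Z (nn k) ω - S (nn k)| := by rw [abs_sub_comm]; exact le_abs_self _
    calc μ (Ek k) ≤ μ {ω | S (nn k)/2 ≤ |Z (nn k) ω - ∫ x, Z (nn k) x ∂μ|} :=
          measure_mono hsub
      _ ≤ ENNReal.ofReal (variance (Z (nn k)) μ / (S (nn k)/2)^2) :=
          meas_ge_le_variance_div_sq (aux_memLp μ D hD _) (by positivity)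
      _ ≤ ENNReal.ofReal ((1/2:ℝ)^k) := by
          apply ENNReal.ofReal_le_ofReal
          have h := (hnn k).1
          have heq : variance (Z (nn k)) μ / (S (nn k)/2)^2
              = 4 * (variance (Z (nn k)) μ / (S (nn k))^2) := by
            field_simp; ring
          rw [heq]
          linarith
  have hsum : ∑' k, μ (Ek k) ≠ ⊤ := by
    have hle : ∑' k, μ (Ek k) ≤ ∑' k : ℕ, ENNReal.ofReal ((1/2:ℝ)^k) :=
      ENNReal.tsum_le_tsum hEk
    have h2 : ∑' k : ℕ, ENNReal.ofReal ((1/2:ℝ)^k)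
        = (1 - ENNReal.ofReal (1/2))⁻¹ := by
      rw [← ENNReal.tsum_geometric]
      congr 1
      funext k
      rw [ENNReal.ofReal_pow (by norm_num)]
    refine ne_top_of_le_ne_top ?_ hle
    rw [h2]
    rw [Ne, ENNReal.inv_eq_top]
    intro h0
    have : ENNReal.ofReal (1/2) < 1 := ENNReal.ofReal_lt_one.2 (by norm_num)
    rw [tsub_eq_zero_iff_le] at h0
    exact absurd h0 (not_le.mpr this)
  have hlimE : μ (limsup Ek atTop) = 0 := measure_limsup_atTop_eq_zero hsum
  have hsubset : (limsup D atTop)ᶜ ⊆ limsup Ek atTop := by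
    intro ω hω
    by_contra hω2
    rw [Set.mem_compl_iff, mem_limsup_iff_frequently_mem, not_frequently] at hω
    rw [mem_limsup_iff_frequently_mem, not_frequently] at hω2
    obtain ⟨N, hN⟩ := eventually_atTop.1 hω
    obtain ⟨K, hK⟩ := eventually_atTop.1 hω2
    have hZle : ∀ n, Z n ω ≤ N := by
      intro n
      have hterm : ∀ m : ℕ, Set.indicator (D m) (fun _ => (1:ℝ)) ω
          ≤ if m < N then (1:ℝ) else 0 := by
        intro m
        by_cases hm : m < N
        · rw [if_pos hm]
          by_cases hmem : ω ∈ D m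
          · rw [Set.indicator_of_mem hmem]
          · rw [Set.indicator_of_notMem hmem]; norm_num
        · rw [if_neg hm, Set.indicator_of_notMem (hN m (by omega))]
      calc Z n ω ≤ ∑ m ∈ Finset.range n, (if m < N then (1:ℝ) else 0) :=
            Finset.sum_le_sum fun m _ => hterm m
        _ = ∑ m ∈ (Finset.range n).filter (· < N), (1:ℝ) := (Finset.sum_filter _ _).symm
        _ = (((Finset.range n).filter (· < N)).card : ℝ) := by
            rw [Finset.sum_const, nsmul_eq_mul, mul_one]
        _ ≤ N := by
          have : ((Finset.range n).filter (· < N)).card ≤ N := by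
            refine le_trans (Finset.card_le_card fun x hx =>
              Finset.mem_range.mpr (Finset.mem_filter.mp hx).2) ?_
            simp
          exact_mod_cast this
    set k := max K (2*N+2) with hk
    have h1 : ω ∉ Ek k := hK k (le_max_left _ _)
    simp only [hEkdef, Set.mem_setOf_eq, not_le] at h1
    have h2 := (hnn k).2
    have h3 := hZle (nn k)
    have h4 : (2*(N:ℝ)+2) ≤ (k:ℝ) := by exact_mod_cast le_max_right K (2*N+2)
    linarith
  have hnull : μ ((limsup D atTop)ᶜ) = 0 := measure_mono_null hsubset hlimE
  exact (prob_compl_eq_zero_iff (MeasurableSet.measurableSet_limsup hD)).1 hnull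


end AuxSection
end
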